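/- Let n and m be non-negative integers with m ≤ C(n,2), and let d ≥ 1 and 0 ≤ ℓ ≤ d − 1 be the unique integers such that m = C(d,2) + ℓ. Then every finite simple graph with n vertices and m edges has at most 2^d + 2^ℓ + n − d − 1 cliques. -/

import Mathlib

open Finset

noncomputable def cliqueCount {V : Type*} (G : SimpleGraph V) : ℕ :=
  Nat.card {s : Finset V // G.IsClique (s : Set V)}

lemma choose_two_succ (k : ℕ) : (k+1).choose 2 = k.choose 2 + k := by
  simp [Nat.choose_succ_succ, Nat.choose_one_right, Nat.add_comm]

lemma two_mul_choose_two (n : ℕ) : 2 * n.choose 2 = n * (n - 1) := by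
  induction n with
  | zero => rfl
  | succ k ih =>
    rw [choose_two_succ, Nat.mul_add, ih]
    cases k with
    | zero => rfl
    | succ j => simp only [Nat.add_sub_cancel]; ring

lemma two_pow_add_le (a b : ℕ) : (2:ℤ)^a + 2^b ≤ 2^(a+b) + 1 := by
  have h1 : (1:ℤ) ≤ 2^a := one_le_pow₀ (by norm_num)
  have h2 : (1:ℤ) ≤ 2^b := one_le_pow₀ (by norm_num)
  have := mul_nonneg (sub_nonneg.2 h1) (sub_nonneg.2 h2)
  rw [pow_add]
  nlinarith

lemma key_arith (d ℓ δ : ℕ) (hℓ : ℓ ≤ d - 1) (hδ1 : 1 ≤ δ) (hδ : δ ≤ d - 1) :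
    ∃ d' ℓ' : ℕ, 1 ≤ d' ∧ ℓ' ≤ d' - 1 ∧ d.choose 2 + ℓ = d'.choose 2 + ℓ' + δ ∧
      (2:ℤ)^d' + 2^ℓ' + 2^δ ≤ 2^d + 2^ℓ + (d':ℤ) - (d:ℤ) + 1 := by
  have hd2 : 2 ≤ d := by omega
  by_cases hcase : δ ≤ ℓ
  · refine ⟨d, ℓ - δ, by omega, by omega, by omega, ?_⟩
    have := two_pow_add_le (ℓ - δ) δ
    rw [show ℓ - δ + δ = ℓ by omega] at this
    linarith
  · obtain ⟨a, rfl⟩ : ∃ a, d = δ + a + 1 := ⟨d - δ - 1, by omega⟩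
    refine ⟨δ + a, ℓ + a, by omega, by omega, by rw [choose_two_succ]; omega, ?_⟩
    have h1 : (2:ℤ)^ℓ ≤ 2^δ := pow_le_pow_right₀ (by norm_num) (by omega)
    have h2 : (1:ℤ) ≤ 2^a := one_le_pow₀ (by norm_num)
    have key : (2:ℤ)^(ℓ + a) + 2^δ ≤ 2^(δ + a) + 2^ℓ := by
      rw [pow_add, pow_add]; nlinarith
    have he : (2:ℤ)^(δ + a + 1) = 2 * 2^(δ + a) := by ring
    push_cast
    linarith

lemma cliqueCount_eq_card {V : Type*} [Fintype V] (G : SimpleGraph V)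
    [DecidablePred fun s : Finset V => G.IsClique (s : Set V)] :
    cliqueCount G = (Finset.univ.filter fun s : Finset V => G.IsClique (s : Set V)).card := by
  rw [cliqueCount, ← Fintype.card_subtype]
  exact Nat.card_eq_fintype_card

open Classical in
lemma natCard_edgeSet {V : Type*} [Fintype V] (G : SimpleGraph V) :
    Nat.card G.edgeSet = G.edgeFinset.card := by
  rw [SimpleGraph.edgeFinset_card, Nat.card_eq_fintype_card]

lemma main_aux {V : Type*} [Fintype V] (m : ℕ) :
    ∀ (G : SimpleGraph V) (d ℓ : ℕ), Nat.card G.edgeSet = m → 1 ≤ d → ℓ ≤ d - 1 →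
      m = d.choose 2 + ℓ →
      (cliqueCount G : ℤ) ≤ 2^d + 2^ℓ + (Fintype.card V : ℤ) - d - 1 := by
  classical
  induction m using Nat.strong_induction_on with
  | _ m IH =>
  intro G d ℓ hm hd hℓ hdecomp
  have hm' : G.edgeFinset.card = m := by rw [← hm, natCard_edgeSet]
  rcases Nat.eq_zero_or_pos m with hm0 | hmpos
  · -- base case: no edges
    subst hm0
    have hbot : G = ⊥ := by
      rw [← SimpleGraph.edgeSet_eq_empty, ← Set.toFinset_eq_empty, ← SimpleGraph.edgeFinset]
      exact Finset.card_eq_zero.mp hm'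
    subst hbot
    have hℓ0 : ℓ = 0 := by omega
    have hd1 : d = 1 := by
      have : d.choose 2 = 0 := by omega
      rw [Nat.choose_eq_zero_iff] at this
      omega
    subst hℓ0; subst hd1
    have hsub : (Finset.univ.filter fun s : Finset V =>
        (⊥ : SimpleGraph V).IsClique (s : Set V)) ⊆
        insert (∅ : Finset V) (Finset.univ.image fun v : V => {v}) := by
      intro s hs
      simp only [Finset.mem_filter, SimpleGraph.isClique_bot_iff] at hs
      have hcard : s.card ≤ 1 := by
        rw [Finset.card_le_one]
        intro a ha b hb
        exact hs.2 (by simpa using ha) (by simpa using hb)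
      interval_cases h : s.card
      · simp [Finset.card_eq_zero.mp h]
      · obtain ⟨a, rfl⟩ := Finset.card_eq_one.mp h
        simp
    have hcount : cliqueCount (⊥ : SimpleGraph V) ≤ Fintype.card V + 1 := by
      rw [cliqueCount_eq_card]
      calc _ ≤ (insert (∅ : Finset V) (Finset.univ.image fun v : V => ({v} : Finset V))).card :=
              Finset.card_le_card hsub
        _ ≤ (Finset.univ.image fun v : V => ({v} : Finset V)).card + 1 :=
              Finset.card_insert_le _ _
        _ ≤ Fintype.card V + 1 := by
              have h1 := Finset.card_image_le (s := (Finset.univ : Finset V))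
                (f := fun v : V => ({v} : Finset V))
              rw [Finset.card_univ] at h1
              omega
    have : (cliqueCount (⊥ : SimpleGraph V) : ℤ) ≤ (Fintype.card V : ℤ) + 1 := by
      exact_mod_cast hcount
    norm_num
    linarith
  · -- inductive step
    -- find a vertex of minimum positive degree
    have hne : (Finset.univ.filter fun v => 0 < G.degree v).Nonempty := by
      have : G.edgeFinset.Nonempty := by
        rw [← Finset.card_pos, hm']; exact hmpos
      obtain ⟨e, he⟩ := this
      rw [SimpleGraph.mem_edgeFinset] at he
      induction e with
      | h a b =>
        refine ⟨a, ?_⟩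
        simp only [Finset.mem_filter, Finset.mem_univ, true_and,
          SimpleGraph.degree_pos_iff_exists_adj]
        exact ⟨b, he⟩
    obtain ⟨v, hv, hmin⟩ := Finset.exists_min_image (Finset.univ.filter fun u => 0 < G.degree u) (fun u => G.degree u : V → ℕ) hne
    set δ := G.degree v with hδdef
    have hδ1 : 1 ≤ δ := by
      simp only [Finset.mem_filter] at hv; omega
    -- δ(δ+1) ≤ 2m
    have hsub : insert v (G.neighborFinset v) ⊆ Finset.univ.filter fun u => 0 < G.degree u := by
      intro u hu
      simp only [Finset.mem_insert, SimpleGraph.mem_neighborFinset] at hu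
      simp only [Finset.mem_filter, Finset.mem_univ, true_and,
        SimpleGraph.degree_pos_iff_exists_adj]
      rcases hu with rfl | hadj
      · simp only [Finset.mem_filter, Finset.mem_univ, true_and,
          SimpleGraph.degree_pos_iff_exists_adj] at hv
        exact hv
      · exact ⟨v, hadj.symm⟩
    have hsum : δ * (δ + 1) ≤ 2 * m := by
      have hc : (insert v (G.neighborFinset v)).card = δ + 1 := by
        rw [Finset.card_insert_of_notMem (G.notMem_neighborFinset_self v),
          SimpleGraph.card_neighborFinset_eq_degree]
      calc δ * (δ + 1) = ∑ _u ∈ insert v (G.neighborFinset v), δ := by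
              rw [Finset.sum_const, hc, smul_eq_mul, Nat.mul_comm]
        _ ≤ ∑ u ∈ insert v (G.neighborFinset v), G.degree u :=
              Finset.sum_le_sum fun u hu => hmin u (hsub hu)
        _ ≤ ∑ u ∈ Finset.univ.filter (fun u => 0 < G.degree u), G.degree u :=
              Finset.sum_le_sum_of_subset hsub
        _ ≤ ∑ u, G.degree u := Finset.sum_le_sum_of_subset (Finset.filter_subset _ _)
        _ = 2 * G.edgeFinset.card := G.sum_degrees_eq_twice_card_edges
        _ = 2 * m := by rw [hm']
    -- δ ≤ d - 1
    have hδd : δ ≤ d - 1 := by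
      have h2m : 2 * m = d * (d - 1) + 2 * ℓ := by
        rw [hdecomp, Nat.mul_add, two_mul_choose_two]
      obtain ⟨e, rfl⟩ : ∃ e, d = e + 1 := ⟨d - 1, by omega⟩
      simp only [Nat.add_sub_cancel] at h2m hℓ ⊢
      by_contra hcon
      push_neg at hcon
      have h1 : e + 1 ≤ δ := hcon
      nlinarith [hsum, h2m, hℓ]
    obtain ⟨d', ℓ', hd', hℓ', hEq, hkey⟩ := key_arith d ℓ δ hℓ hδ1 hδd
    have hδm : δ ≤ m := by omega
    -- the graph with v isolated
    set G' := G.deleteEdges (G.incidenceFinset v : Set (Sym2 V)) with hG'def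
    have hG'card : G'.edgeFinset.card = m - δ := by
      show (G.deleteEdges (G.incidenceFinset v : Set (Sym2 V))).edgeFinset.card = m - δ
      rw [SimpleGraph.edgeFinset_deleteEdges]
      have hsub2 : G.incidenceFinset v ⊆ G.edgeFinset := by
        intro e he
        rw [SimpleGraph.mem_incidenceFinset] at he
        rw [SimpleGraph.mem_edgeFinset]
        exact he.1
      rw [Finset.card_sdiff_of_subset hsub2, hm', SimpleGraph.card_incidenceFinset_eq_degree]
    -- clique counting
    set A := (Finset.univ.filter fun s : Finset V => G.IsClique (s : Set V) ∧ v ∉ s).card with hA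
    set B := (Finset.univ.filter fun s : Finset V => G.IsClique (s : Set V) ∧ v ∈ s).card with hB
    have hAB : cliqueCount G = A + B := by
      rw [cliqueCount_eq_card, hA, hB,
        ← Finset.card_filter_add_card_filter_not (s := Finset.univ.filter fun s :
          Finset V => G.IsClique (s : Set V)) (p := fun s => v ∈ s),
        Finset.filter_filter, Finset.filter_filter]
      omega
    have hBle : B ≤ 2 ^ δ := by
      have hle : (Finset.univ.filter fun s : Finset V =>
          G.IsClique (s : Set V) ∧ v ∈ s).card ≤ ((G.neighborFinset v).powerset).card := by
        apply Finset.card_le_card_of_injOn (fun s => s.erase v)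
        · intro s hs
          simp only [Finset.mem_coe, Finset.mem_filter, Finset.mem_univ, true_and] at hs
          rw [Finset.mem_coe, Finset.mem_powerset]
          intro u hu
          rw [Finset.mem_erase] at hu
          rw [SimpleGraph.mem_neighborFinset]
          exact hs.1 (by simpa using hs.2) (by simpa using hu.2) (Ne.symm hu.1)
        · intro s hs t ht hst
          simp only [Finset.mem_coe, Finset.mem_filter, Finset.mem_univ, true_and] at hs ht
          rw [← Finset.insert_erase hs.2, ← Finset.insert_erase ht.2]
          exact congrArg (insert v) hst
      rw [Finset.card_powerset, SimpleGraph.card_neighborFinset_eq_degree] at hle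
      rw [hB]
      exact hle
    have hG'cliques : (Finset.univ.filter fun s : Finset V => G'.IsClique (s : Set V)) =
        insert ({v} : Finset V)
          (Finset.univ.filter fun s : Finset V => G.IsClique (s : Set V) ∧ v ∉ s) := by
      ext s
      simp only [Finset.mem_filter, Finset.mem_univ, true_and, Finset.mem_insert]
      constructor
      · intro hs
        by_cases hvs : v ∈ s
        · left
          rw [Finset.eq_singleton_iff_unique_mem]
          refine ⟨hvs, fun w hw => ?_⟩
          by_contra hwv
          have hadj := hs (by simpa using hvs) (by simpa using hw) (Ne.symm hwv)
          rw [hG'def, SimpleGraph.deleteEdges_adj] at hadj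
          exact hadj.2 (by
            rw [Finset.mem_coe, SimpleGraph.mem_incidenceFinset]
            exact (G.mk'_mem_incidenceSet_left_iff).2 hadj.1)
        · right
          refine ⟨fun a ha b hb hab => ?_, hvs⟩
          have := hs ha hb hab
          rw [hG'def, SimpleGraph.deleteEdges_adj] at this
          exact this.1
      · rintro (rfl | ⟨hs, hvs⟩)
        · intro a ha b hb hab
          simp only [Finset.coe_singleton, Set.mem_singleton_iff] at ha hb
          exact absurd (ha.trans hb.symm) hab
        · intro a ha b hb hab
          rw [hG'def, SimpleGraph.deleteEdges_adj]
          refine ⟨hs ha hb hab, ?_⟩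
          rw [Finset.mem_coe, SimpleGraph.mem_incidenceFinset,
            SimpleGraph.mk'_mem_incidenceSet_iff]
          rintro ⟨-, rfl | rfl⟩
          · exact hvs (by simpa using ha)
          · exact hvs (by simpa using hb)
    have hG'count : cliqueCount G' = A + 1 := by
      rw [cliqueCount_eq_card, hG'cliques, Finset.card_insert_of_notMem (by simp), hA]
    -- apply induction hypothesis
    have hIH := IH (m - δ) (by omega) G' d' ℓ'
      (by rw [natCard_edgeSet]; convert hG'card) hd' hℓ' (by omega)
    -- combine
    rw [hAB]
    rw [hG'count] at hIH
    have hBle' : (B : ℤ) ≤ 2 ^ δ := by exact_mod_cast hBle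
    push_cast at hIH ⊢
    linarith

theorem clique_count_upper_bound {V : Type*} [Fintype V] (G : SimpleGraph V)
    (n m d ℓ : ℕ) (hn : Fintype.card V = n) (hm : Nat.card G.edgeSet = m)
    (hmn : m ≤ n.choose 2) (hd : 1 ≤ d) (hℓ : ℓ ≤ d - 1)
    (hdecomp : m = d.choose 2 + ℓ) :
    (cliqueCount G : ℤ) ≤ 2 ^ d + 2 ^ ℓ + n - d - 1 := by
  subst hn
  exact main_aux m G d ℓ hm hd hℓ hdecomp
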